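/- For a graph G on n ≥ 3 vertices, the third largest signless Laplacian eigenvalue satisfies γ₃(G) ≥ d₃(G) − √2, where d₃(G) is the third largest vertex degree. -/

import Mathlib

open Matrix SimpleGraph Polynomial

/-- The signless Laplacian matrix Q(G) = D(G) + A(G). -/
noncomputable def signlessLaplacian {V : Type*} [Fintype V] [DecidableEq V]
    (G : SimpleGraph V) [DecidableRel G.Adj] : Matrix V V ℝ :=
  Matrix.diagonal (fun v => (G.degree v : ℝ)) + G.adjMatrix ℝ

/-- Eigenvalues (roots of the characteristic polynomial, with multiplicity),
sorted in non-increasing order. -/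
noncomputable def eigsDesc {V : Type*} [Fintype V] [DecidableEq V] (M : Matrix V V ℝ) : List ℝ :=
  (M.charpoly.roots.sort (· ≤ ·)).reverse

/-- Vertex degrees sorted in non-increasing order. -/
noncomputable def degsDesc {V : Type*} [Fintype V] [DecidableEq V]
    (G : SimpleGraph V) [DecidableRel G.Adj] : List ℕ :=
  ((Finset.univ.val.map fun v => G.degree v).sort (· ≤ ·)).reverse

set_option linter.unusedSectionVars false

section ListLemmas

variable {α : Type*} [LinearOrder α]

/-- In a list sorted in non-increasing order, if at least `k+1` entries are `≥ c`,
then the entry at index `k` is `≥ c`. -/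
lemma sorted_ge_getD {l : List α} (hl : l.Pairwise (· ≥ ·)) {c : α} {k : ℕ} (d : α)
    (h : k + 1 ≤ (l.filter (fun x => c ≤ x)).length) : c ≤ l.getD k d := by
  induction l generalizing k with
  | nil => simp at h
  | cons a t ih =>
    rcases k with _ | k
    · -- filter nonempty: some element ≥ c, head is max
      have hne : (List.filter (fun x => decide (c ≤ x)) (a :: t)) ≠ [] := by
        intro he; rw [he] at h; simp at h
      obtain ⟨x, hx⟩ := List.exists_mem_of_ne_nil _ hne
      rw [List.mem_filter] at hx
      have hcx : c ≤ x := by simpa using hx.2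
      rcases List.mem_cons.mp hx.1 with rfl | hxt
      · simpa using hcx
      · have := List.rel_of_pairwise_cons hl hxt
        simpa using le_trans hcx this
    · have ht : k + 1 ≤ (t.filter (fun x => c ≤ x)).length := by
        rw [List.filter_cons] at h
        by_cases hca : c ≤ a <;> simp [hca] at h <;> omega
      simpa using ih hl.of_cons ht

/-- In a list sorted in non-increasing order, at least `k+1` entries are `≥` the entry
at index `k`. -/
lemma sorted_ge_count {l : List α} (hl : l.Pairwise (· ≥ ·)) {k : ℕ} (d : α)
    (hk : k < l.length) :
    k + 1 ≤ (l.filter (fun x => l.getD k d ≤ x)).length := by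
  induction l generalizing k with
  | nil => simp at hk
  | cons a t ih =>
    rcases k with _ | k
    · have : a ∈ List.filter (fun x => decide ((a :: t).getD 0 d ≤ x)) (a :: t) := by
        simp
      have := List.length_pos_of_mem this
      omega
    · have hk' : k < t.length := by simpa using hk
      have ih' := ih hl.of_cons (k := k) hk'
      have hgd : (a :: t).getD (k + 1) d = t.getD k d := rfl
      have hat : t.getD k d ≤ a := by
        have hmem : t.getD k d ∈ t := by
          rw [List.getD_eq_getElem _ _ hk']
          exact List.getElem_mem _
        exact List.rel_of_pairwise_cons hl hmem
      rw [hgd, List.filter_cons]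
      simp only [hat, decide_true, if_true]
      simp only [List.length_cons]
      omega

end ListLemmas

section Charpoly

variable {V : Type*} [Fintype V] [DecidableEq V]

lemma charpoly_diagonal (d : V → ℝ) :
    (Matrix.diagonal d).charpoly = ∏ i, (X - C (d i)) := by
  have h : charmatrix (Matrix.diagonal d) = Matrix.diagonal (fun i => X - C (d i)) := by
    ext i j
    by_cases hij : i = j
    · subst hij; simp [charmatrix_apply_eq]
    · simp [charmatrix_apply_ne _ _ _ hij, Matrix.diagonal_apply_ne _ hij]
  rw [Matrix.charpoly, h, Matrix.det_diagonal]

lemma charpoly_unitary_conj (U D : Matrix V V ℝ) (h1 : star U * U = 1) (h2 : U * star U = 1) :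
    (U * D * star U).charpoly = D.charpoly := by
  classical
  set φ : Matrix V V ℝ →+* Matrix V V ℝ[X] := (Polynomial.C : ℝ →+* ℝ[X]).mapMatrix with hφ
  have key : charmatrix (U * D * star U) = φ U * charmatrix D * φ (star U) := by
    unfold charmatrix
    rw [mul_sub, sub_mul]
    congr 1
    · -- φ U * scalar X * φ (star U) = scalar X
      have hs : Commute (Matrix.scalar V (X : ℝ[X])) (φ U) :=
        Matrix.scalar_commute (n := V) (X : ℝ[X]) (fun r' => Commute.all _ _) (φ U)
      rw [← hs.eq, mul_assoc, ← _root_.map_mul, h2, _root_.map_one, mul_one]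
    · simp only [hφ, ← _root_.map_mul]
  rw [Matrix.charpoly, Matrix.charpoly, key]
  rw [Matrix.det_mul, Matrix.det_mul]
  have : (φ U).det * (φ (star U)).det = 1 := by
    rw [mul_comm, ← Matrix.det_mul, ← _root_.map_mul, h1, _root_.map_one, Matrix.det_one]
  calc (φ U).det * (charmatrix D).det * (φ (star U)).det
      = ((φ U).det * (φ (star U)).det) * (charmatrix D).det := by ring
    _ = (charmatrix D).det := by rw [this, one_mul]

end Charpoly

section Spectral

variable {V : Type*} [Fintype V] [DecidableEq V]

lemma signlessLaplacian_isHermitian (G : SimpleGraph V) [DecidableRel G.Adj] :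
    (Matrix.diagonal (fun v => (G.degree v : ℝ)) + G.adjMatrix ℝ).IsHermitian := by
  ext i j
  simp only [Matrix.conjTranspose_apply, Matrix.add_apply, Matrix.diagonal_apply,
    SimpleGraph.adjMatrix_apply, star_trivial]
  by_cases hij : i = j
  · subst hij; rfl
  · simp [hij, Ne.symm hij, G.adj_comm i j]

lemma charpoly_roots_eq_eigenvalues {A : Matrix V V ℝ} (hA : A.IsHermitian) :
    A.charpoly.roots = Finset.univ.val.map hA.eigenvalues := by
  have hsp := hA.spectral_theorem
  have hU1 : star ((hA.eigenvectorUnitary : Matrix V V ℝ)) * (hA.eigenvectorUnitary : Matrix V V ℝ) = 1 :=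
    (Unitary.mem_iff.mp hA.eigenvectorUnitary.2).1
  have hU2 : (hA.eigenvectorUnitary : Matrix V V ℝ) * star ((hA.eigenvectorUnitary : Matrix V V ℝ)) = 1 :=
    (Unitary.mem_iff.mp hA.eigenvectorUnitary.2).2
  have hdiag : Matrix.diagonal ((RCLike.ofReal : ℝ → ℝ) ∘ hA.eigenvalues)
      = Matrix.diagonal hA.eigenvalues := by
    congr 1
  have hc : A.charpoly = (Matrix.diagonal hA.eigenvalues).charpoly := by
    conv_lhs => rw [hsp]
    rw [hdiag]
    exact charpoly_unitary_conj _ _ hU1 hU2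
  rw [hc, _root_.charpoly_diagonal]
  have : (∏ i, (X - C (hA.eigenvalues i)))
      = ((Finset.univ.val.map hA.eigenvalues).map (fun a => X - C a)).prod := by
    rw [Multiset.map_map]
    rfl
  rw [this, Polynomial.roots_multiset_prod_X_sub_C]

end Spectral

section Core

variable {V : Type*} [Fintype V] [DecidableEq V]

local notation "E" => EuclideanSpace ℝ V

/-- Coordinates w.r.t. an orthonormal basis vanish outside the spanning index set. -/
lemma repr_eq_zero_of_mem_span (b : OrthonormalBasis V ℝ E) (s : Set V)
    {x : E} (hx : x ∈ Submodule.span ℝ (⇑b '' s)) {j : V} (hj : j ∉ s) :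
    b.repr x j = 0 := by
  classical
  let f : E →ₗ[ℝ] ℝ :=
    (LinearMap.proj j) ∘ₗ ((WithLp.linearEquiv 2 ℝ (V → ℝ)).toLinearMap ∘ₗ
      b.repr.toLinearEquiv.toLinearMap)
  have hker : Submodule.span ℝ (⇑b '' s) ≤ LinearMap.ker f := by
    rw [Submodule.span_le]
    rintro _ ⟨i, hi, rfl⟩
    have : b.repr (b i) = EuclideanSpace.single i (1 : ℝ) := b.repr_self i
    simp only [SetLike.mem_coe, LinearMap.mem_ker, f, LinearMap.comp_apply]
    show (b.repr (b i)) j = 0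
    rw [this, EuclideanSpace.single_apply]
    simp only [ite_eq_right_iff]
    intro hji; exact absurd (hji ▸ hi) hj
  exact hker hx

lemma finrank_span_orthonormal (b : OrthonormalBasis V ℝ E) (s : Finset V) :
    Module.finrank ℝ (Submodule.span ℝ (⇑b '' ↑s)) = s.card := by
  classical
  have hli : LinearIndependent ℝ (fun i : ↥(↑s : Set V) => b i) :=
    b.orthonormal.linearIndependent.comp Subtype.val Subtype.val_injective
  have himg : Set.range (fun i : ↥(↑s : Set V) => b i) = ⇑b '' ↑s := by
    rw [← Set.image_eq_range]
  rw [← himg, finrank_span_eq_card hli, ← Fintype.card_coe]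
  rfl

/-- The 3×3 cross-term bound: for 0/1 coefficients, the off-diagonal quadratic form
is bounded below by `-√2` times the sum of squares. -/
lemma cross_term_bound (α β γ a b c : ℝ)
    (hα : α = 0 ∨ α = 1) (hβ : β = 0 ∨ β = 1) (hγ : γ = 0 ∨ γ = 1) :
    -Real.sqrt 2 * (a ^ 2 + b ^ 2 + c ^ 2)
      ≤ 2 * (α * (a * b) + β * (a * c) + γ * (b * c)) := by
  set s := Real.sqrt 2 with hs
  have hs2 : s ^ 2 = 2 := Real.sq_sqrt (by norm_num)
  have hs1 : 1 ≤ s := by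
    rw [hs, show (2:ℝ) = Real.sqrt 2 * Real.sqrt 2 from (Real.mul_self_sqrt (by norm_num)).symm] at hs2
    nlinarith [Real.sqrt_nonneg 2, Real.sq_sqrt (show (0:ℝ) ≤ 2 by norm_num),
      Real.sqrt_le_sqrt (show (1:ℝ) ≤ 2 by norm_num), Real.sqrt_one]
  have hs0 : 0 < s := lt_of_lt_of_le one_pos hs1
  rcases hα with rfl | rfl <;> rcases hβ with rfl | rfl <;> rcases hγ with rfl | rfl
  · nlinarith [sq_nonneg a, sq_nonneg b, sq_nonneg c]
  · nlinarith [sq_nonneg (b + c), sq_nonneg a, sq_nonneg b, sq_nonneg c]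
  · nlinarith [sq_nonneg (a + c), sq_nonneg a, sq_nonneg b, sq_nonneg c]
  · nlinarith [sq_nonneg (s * c + a + b), sq_nonneg (a - b), sq_nonneg c]
  · nlinarith [sq_nonneg (a + b), sq_nonneg a, sq_nonneg b, sq_nonneg c]
  · nlinarith [sq_nonneg (s * b + a + c), sq_nonneg (a - c), sq_nonneg b]
  · nlinarith [sq_nonneg (s * a + b + c), sq_nonneg (b - c), sq_nonneg a]
  · nlinarith [sq_nonneg (a + b + c), sq_nonneg a, sq_nonneg b, sq_nonneg c]

end Core


section Rest
variable {V : Type*} [Fintype V] [DecidableEq V]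

lemma dotProduct_sum' (u : V → ℝ) (w : V → V → ℝ) :
    dotProduct u (∑ j, w j) = ∑ j, dotProduct u (w j) := by
  simp only [dotProduct, Finset.sum_apply, Finset.mul_sum]
  rw [Finset.sum_comm]

lemma sum_dotProduct' (w : V → V → ℝ) (u : V → ℝ) :
    dotProduct (∑ j, w j) u = ∑ j, dotProduct (w j) u := by
  simp only [dotProduct, Finset.sum_apply, Finset.sum_mul]
  rw [Finset.sum_comm]

lemma dot_smul_expand (f : V → V → ℝ) (c : V → ℝ) (g : V → V → ℝ) (d : V → ℝ)
    (horth : ∀ i j, dotProduct (f i) (g j) = if i = j then 1 else 0) :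
    dotProduct (∑ i, c i • f i) (∑ j, d j • g j) = ∑ i, c i * d i := by
  rw [sum_dotProduct']
  have : ∀ i ∈ Finset.univ, dotProduct (c i • f i) (∑ j, d j • g j) = c i * d i := by
    intro i _
    rw [smul_dotProduct, dotProduct_sum']
    rw [Finset.sum_eq_single i]
    · rw [dotProduct_smul, horth i i, if_pos rfl]
      simp [mul_comm]
    · intro j _ hj
      rw [dotProduct_smul, horth i j, if_neg (Ne.symm hj)]
      simp
    · intro h; exact absurd (Finset.mem_univ i) h
  rw [Finset.sum_congr rfl this]

lemma quad_expand {A : Matrix V V ℝ} (hA : A.IsHermitian) (x : EuclideanSpace ℝ V) :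
    dotProduct x (A *ᵥ x)
      = ∑ j, hA.eigenvalues j * (hA.eigenvectorBasis.repr x j) ^ 2 ∧
    dotProduct x x = ∑ j, (hA.eigenvectorBasis.repr x j) ^ 2 := by
  classical
  set b := hA.eigenvectorBasis with hb
  set c : V → ℝ := fun j => b.repr x j with hc
  have hx : x = ∑ j, c j • b j := (b.sum_repr x).symm
  have horth : ∀ i j, dotProduct (b i : V → ℝ) (b j) = if i = j then 1 else 0 := by
    intro i j
    have := orthonormal_iff_ite.mp b.orthonormal i j
    rw [← this]
    simp [PiLp.inner_apply, dotProduct, RCLike.inner_apply, conj_trivial, mul_comm]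
  have hmul : A *ᵥ x = ∑ j, (c j * hA.eigenvalues j) • (b j : V → ℝ) := by
    conv_lhs => rw [hx]
    simp only [WithLp.ofLp_sum, WithLp.ofLp_smul]
    have h1 : A *ᵥ (∑ j, c j • (b j : V → ℝ)) = ∑ j, c j • (A *ᵥ (b j : V → ℝ)) := by
      rw [← Matrix.mulVecLin_apply, map_sum]
      simp [Matrix.mulVecLin_apply]
    rw [h1]
    refine Finset.sum_congr rfl fun j _ => ?_
    have h2 : (A *ᵥ (b j : V → ℝ)) = hA.eigenvalues j • (b j : V → ℝ) :=
      hA.mulVec_eigenvectorBasis j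
    rw [h2, smul_smul, mul_comm]
  constructor
  · conv_lhs => rw [hmul]
    conv_lhs => rw [hx]
    simp only [WithLp.ofLp_sum, WithLp.ofLp_smul]
    rw [dot_smul_expand _ _ _ _ horth]
    refine Finset.sum_congr rfl fun j _ => by ring
  · conv_lhs => rw [hx]
    simp only [WithLp.ofLp_sum, WithLp.ofLp_smul]
    rw [dot_smul_expand _ _ _ _ horth]
    refine Finset.sum_congr rfl fun j _ => by ring


lemma filter_length_rev_sort {α : Type*} [LinearOrder α] (M : Multiset α)
    (p : α → Prop) [DecidablePred p] :
    (((M.sort (· ≤ ·)).reverse).filter (fun x => p x)).length = (M.filter p).card := by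
  have h1 := (List.reverse_perm (M.sort (· ≤ ·))).filter (fun x => decide (p x))
  rw [h1.length_eq]
  conv_rhs => rw [← Multiset.sort_eq M (· ≤ ·)]
  rfl

lemma card_filter_map' {α : Type*} (f : V → α) (p : α → Prop) [DecidablePred p] :
    Multiset.card ((Finset.univ.val.map f).filter p)
      = (Finset.univ.filter (fun z => p (f z))).card := by
  rw [Multiset.filter_map, Multiset.card_map]
  rfl

lemma rev_sort_sorted {α : Type*} [LinearOrder α] (M : Multiset α) :
    ((M.sort (· ≤ ·)).reverse).Pairwise (· ≥ ·) := by
  rw [List.pairwise_reverse]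
  exact M.pairwise_sort (· ≤ ·)


lemma quad_lower (G : SimpleGraph V) [DecidableRel G.Adj] {u v w : V}
    (huv : u ≠ v) (huw : u ≠ w) (hvw : v ≠ w) (d3 : ℝ)
    (hdu : d3 ≤ G.degree u) (hdv : d3 ≤ G.degree v) (hdw : d3 ≤ G.degree w)
    (y : V → ℝ) (hy : ∀ j, j ∉ ({u, v, w} : Finset V) → y j = 0) :
    (d3 - Real.sqrt 2) * (y ⬝ᵥ y)
      ≤ y ⬝ᵥ ((Matrix.diagonal (fun z => (G.degree z : ℝ)) + G.adjMatrix ℝ) *ᵥ y) := by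
  classical
  set Q : Matrix V V ℝ := Matrix.diagonal (fun z => (G.degree z : ℝ)) + G.adjMatrix ℝ with hQdef
  set t : Finset V := {u, v, w} with ht
  have hmemu : u ∈ t := by simp [ht]
  have hsum3 : ∀ f : V → ℝ, ∑ i ∈ t, f i = f u + f v + f w := by
    intro f
    rw [ht, Finset.sum_insert (by simp [huv, huw]), Finset.sum_insert (by simp [hvw]),
      Finset.sum_singleton, add_assoc]
  have hrestrict : ∀ g : V → ℝ, ∑ i, y i * g i = ∑ i ∈ t, y i * g i := by
    intro g
    rw [← Finset.sum_subset (Finset.subset_univ t)]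
    intro i _ hi
    rw [hy i hi, zero_mul]
  have hrestrict' : ∀ g : V → ℝ, ∑ j, g j * y j = ∑ j ∈ t, g j * y j := by
    intro g
    rw [← Finset.sum_subset (Finset.subset_univ t)]
    intro i _ hi
    rw [hy i hi, mul_zero]
  -- entries of Q
  have hdiag : ∀ i, Q i i = (G.degree i : ℝ) := by
    intro i
    simp [hQdef, Matrix.add_apply, Matrix.diagonal_apply_eq]
  have hoff : ∀ i j, i ≠ j → Q i j = if G.Adj i j then 1 else 0 := by
    intro i j hij
    simp [hQdef, Matrix.add_apply, Matrix.diagonal_apply_ne _ hij]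
  -- expand the quadratic form
  have hdot : y ⬝ᵥ y = y u ^ 2 + y v ^ 2 + y w ^ 2 := by
    show ∑ i, y i * y i = _
    rw [hrestrict, hsum3]; ring
  have hquad : y ⬝ᵥ (Q *ᵥ y)
      = (G.degree u : ℝ) * y u ^ 2 + (G.degree v : ℝ) * y v ^ 2 + (G.degree w : ℝ) * y w ^ 2
        + (Q u v * (y u * y v) + Q v u * (y u * y v))
        + (Q u w * (y u * y w) + Q w u * (y u * y w))
        + (Q v w * (y v * y w) + Q w v * (y v * y w)) := by
    show ∑ i, y i * (Q *ᵥ y) i = _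
    rw [hrestrict (fun i => (Q *ᵥ y) i)]
    have hmv : ∀ i, (Q *ᵥ y) i = ∑ j ∈ t, Q i j * y j := by
      intro i
      show ∑ j, Q i j * y j = _
      rw [hrestrict' (fun j => Q i j)]
    calc ∑ i ∈ t, y i * (Q *ᵥ y) i = ∑ i ∈ t, y i * (∑ j ∈ t, Q i j * y j) := by
          refine Finset.sum_congr rfl fun i _ => by rw [hmv]
      _ = _ := by
          rw [hsum3 (fun i => y i * (∑ j ∈ t, Q i j * y j))]
          rw [hsum3 (fun j => Q u j * y j), hsum3 (fun j => Q v j * y j),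
            hsum3 (fun j => Q w j * y j)]
          rw [hdiag u, hdiag v, hdiag w]
          ring
  have hsymm : ∀ i j, Q i j = Q j i := by
    intro i j
    by_cases hij : i = j
    · rw [hij]
    · rw [hoff i j hij, hoff j i (Ne.symm hij)]
      simp [G.adj_comm i j]
  have h01 : ∀ i j, i ≠ j → Q i j = 0 ∨ Q i j = 1 := by
    intro i j hij
    rw [hoff i j hij]
    by_cases h : G.Adj i j <;> simp [h]
  have key := cross_term_bound (Q u v) (Q u w) (Q v w) (y u) (y v) (y w)
    (h01 u v huv) (h01 u w huw) (h01 v w hvw)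
  have hdu' : d3 * y u ^ 2 ≤ (G.degree u : ℝ) * y u ^ 2 :=
    mul_le_mul_of_nonneg_right hdu (sq_nonneg _)
  have hdv' : d3 * y v ^ 2 ≤ (G.degree v : ℝ) * y v ^ 2 :=
    mul_le_mul_of_nonneg_right hdv (sq_nonneg _)
  have hdw' : d3 * y w ^ 2 ≤ (G.degree w : ℝ) * y w ^ 2 :=
    mul_le_mul_of_nonneg_right hdw (sq_nonneg _)
  rw [hdot, hquad, hsymm v u, hsymm w u, hsymm w v]
  nlinarith [key, hdu', hdv', hdw']


lemma three_eigs_ge (G : SimpleGraph V) [DecidableRel G.Adj] (hn : 3 ≤ Fintype.card V)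
    {u v w : V} (huv : u ≠ v) (huw : u ≠ w) (hvw : v ≠ w) (d3 : ℝ)
    (hdu : d3 ≤ G.degree u) (hdv : d3 ≤ G.degree v) (hdw : d3 ≤ G.degree w)
    (hQ : (Matrix.diagonal (fun z => (G.degree z : ℝ)) + G.adjMatrix ℝ).IsHermitian) :
    3 ≤ (Finset.univ.filter (fun i => d3 - Real.sqrt 2 ≤ hQ.eigenvalues i)).card := by
  classical
  set Q : Matrix V V ℝ := Matrix.diagonal (fun z => (G.degree z : ℝ)) + G.adjMatrix ℝ with hQdef
  set c : ℝ := d3 - Real.sqrt 2 with hcdef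
  by_contra hlt
  push_neg at hlt
  set eig := hQ.eigenvalues with heig
  set b := hQ.eigenvectorBasis with hb
  set T : Finset V := Finset.univ.filter (fun i => ¬ c ≤ eig i) with hT
  have hTcard : (Finset.univ.filter (fun i => c ≤ eig i)).card + T.card = Fintype.card V := by
    rw [hT]
    exact Finset.card_filter_add_card_filter_not _
  have hTne : T.Nonempty := by
    rw [← Finset.card_pos]; omega
  set B0 := EuclideanSpace.basisFun V ℝ with hB0
  set S : Submodule ℝ (EuclideanSpace ℝ V) :=
    Submodule.span ℝ (⇑B0 '' ↑({u, v, w} : Finset V)) with hS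
  set W : Submodule ℝ (EuclideanSpace ℝ V) := Submodule.span ℝ (⇑b '' ↑T) with hW
  have hcard3 : ({u, v, w} : Finset V).card = 3 := by
    rw [Finset.card_insert_of_notMem (by simp [huv, huw]),
      Finset.card_insert_of_notMem (by simp [hvw]), Finset.card_singleton]
  have hfinS : Module.finrank ℝ S = 3 := by
    rw [hS, finrank_span_orthonormal B0 _, hcard3]
  have hfinW : Module.finrank ℝ W = T.card := finrank_span_orthonormal b T
  -- dimension count gives a nonzero vector in S ⊓ W
  have hsup : Module.finrank ℝ ↥(S ⊔ W) ≤ Fintype.card V := by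
    have := Submodule.finrank_le (S ⊔ W)
    rwa [finrank_euclideanSpace] at this
  have hinf : 0 < Module.finrank ℝ ↥(S ⊓ W) := by
    have heq := Submodule.finrank_sup_add_finrank_inf_eq S W
    omega
  obtain ⟨x, hx0⟩ := Module.finrank_pos_iff_exists_ne_zero.mp hinf
  obtain ⟨xS, xW⟩ : (x : EuclideanSpace ℝ V) ∈ S ∧ (x : EuclideanSpace ℝ V) ∈ W := by
    have := x.2; rwa [Submodule.mem_inf] at this
  set y : EuclideanSpace ℝ V := (x : EuclideanSpace ℝ V) with hy
  have hyne : y ≠ 0 := fun h => hx0 (Subtype.ext h)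
  -- support of y
  have hysupp : ∀ j, j ∉ ({u, v, w} : Finset V) → (y : V → ℝ) j = 0 := by
    intro j hj
    have h := repr_eq_zero_of_mem_span B0 (↑({u, v, w} : Finset V)) xS (by simpa using hj)
    rw [hB0, EuclideanSpace.basisFun_repr] at h
    exact h
  have hrep0 : ∀ j, j ∉ T → b.repr y j = 0 := fun j hj =>
    repr_eq_zero_of_mem_span b (↑T) xW (by simpa using hj)
  obtain ⟨hqe, hde⟩ := quad_expand hQ y
  -- upper bound via eigenvalues below c
  set m := (T.image eig).max' (hTne.image eig) with hm
  have hmc : m < c := by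
    rw [hm, Finset.max'_lt_iff]
    intro z hz
    rw [Finset.mem_image] at hz
    obtain ⟨i, hi, rfl⟩ := hz
    rw [hT, Finset.mem_filter] at hi
    exact lt_of_not_ge hi.2
  have hup : dotProduct y (Q *ᵥ y) ≤ m * dotProduct y y := by
    rw [hqe, hde, Finset.mul_sum]
    refine Finset.sum_le_sum fun j _ => ?_
    by_cases hjT : j ∈ T
    · have hle : eig j ≤ m := Finset.le_max' _ _ (Finset.mem_image_of_mem eig hjT)
      exact mul_le_mul_of_nonneg_right hle (sq_nonneg _)
    · rw [hrep0 j hjT]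
      simp
  have hsqpos : 0 < dotProduct y y := by
    have hex : ∃ j, (y : V → ℝ) j ≠ 0 := by
      by_contra hall
      push_neg at hall
      exact hyne (WithLp.ofLp_injective 2 (funext hall))
    obtain ⟨j, hjne⟩ := hex
    show 0 < ∑ i, y i * y i
    refine Finset.sum_pos' (fun i _ => mul_self_nonneg _) ⟨j, Finset.mem_univ j, ?_⟩
    exact mul_self_pos.mpr hjne
  have hlow := quad_lower G huv huw hvw d3 hdu hdv hdw y hysupp
  rw [← hQdef] at hlow
  rw [← hcdef] at hlow
  have hfin : c * dotProduct y y < c * dotProduct y y :=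
    lt_of_le_of_lt (le_trans hlow hup) (mul_lt_mul_of_pos_right hmc hsqpos)
  exact lt_irrefl _ hfin


lemma exists_three_distinct {s : Finset V} (h : 3 ≤ s.card) :
    ∃ u v w, u ∈ s ∧ v ∈ s ∧ w ∈ s ∧ u ≠ v ∧ u ≠ w ∧ v ≠ w := by
  obtain ⟨u, hu⟩ := Finset.card_pos.mp (show 0 < s.card by omega)
  have h1 : 0 < (s.erase u).card := by
    have := Finset.card_erase_of_mem hu; omega
  obtain ⟨v, hv⟩ := Finset.card_pos.mp (show 0 < (s.erase u).card from h1)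
  have h2 : 0 < ((s.erase u).erase v).card := by
    have := Finset.card_erase_of_mem hu
    have := Finset.card_erase_of_mem hv
    omega
  obtain ⟨w, hw⟩ := Finset.card_pos.mp (show 0 < ((s.erase u).erase v).card from h2)
  have hvs := Finset.mem_of_mem_erase hv
  have hws := Finset.mem_of_mem_erase (Finset.mem_of_mem_erase hw)
  refine ⟨u, v, w, hu, hvs, hws, ?_, ?_, ?_⟩
  · exact fun h => (Finset.ne_of_mem_erase hv) h.symm
  · exact fun h => (Finset.ne_of_mem_erase (Finset.mem_of_mem_erase hw)) h.symm
  · exact fun h => (Finset.ne_of_mem_erase hw) h.symm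

theorem stmt_17' (G : SimpleGraph V)
    [DecidableRel G.Adj] (hn : 3 ≤ Fintype.card V) :
    (((degsDesc G).getD 2 0 : ℕ) : ℝ) - Real.sqrt 2
      ≤ (eigsDesc (signlessLaplacian G)).getD 2 0 := by
  classical
  set d3 : ℕ := (degsDesc G).getD 2 0 with hd3
  set M : Multiset ℕ := Finset.univ.val.map (fun z => G.degree z) with hM
  have hdd : degsDesc G = (M.sort (· ≤ ·)).reverse := rfl
  have hlen : (degsDesc G).length = Fintype.card V := by
    rw [hdd, List.length_reverse, Multiset.length_sort, hM, Multiset.card_map]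
    exact Finset.card_univ
  have hsorted : (degsDesc G).Pairwise (· ≥ ·) := by
    rw [hdd]; exact rev_sort_sorted M
  have hcount := sorted_ge_count hsorted (k := 2) 0 (by omega)
  have hdeg3 : 3 ≤ (Finset.univ.filter (fun z => d3 ≤ G.degree z)).card := by
    rw [← hd3] at hcount
    rw [hdd] at hcount
    rw [filter_length_rev_sort M (fun x => d3 ≤ x)] at hcount
    rwa [hM, card_filter_map' (fun z => G.degree z) (fun x => d3 ≤ x)] at hcount
  obtain ⟨u, v, w, hu, hv, hw, huv, huw, hvw⟩ := exists_three_distinct hdeg3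
  rw [Finset.mem_filter] at hu hv hw
  have hQ : (Matrix.diagonal (fun z => (G.degree z : ℝ)) + G.adjMatrix ℝ).IsHermitian :=
    signlessLaplacian_isHermitian G
  have h3 := three_eigs_ge G hn huv huw hvw (d3 : ℝ)
    (Nat.cast_le.mpr hu.2) (Nat.cast_le.mpr hv.2) (Nat.cast_le.mpr hw.2) hQ
  have hroots : (signlessLaplacian G).charpoly.roots = Finset.univ.val.map hQ.eigenvalues :=
    charpoly_roots_eq_eigenvalues hQ
  have hed : eigsDesc (signlessLaplacian G)
      = (((signlessLaplacian G).charpoly.roots).sort (· ≤ ·)).reverse := rfl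
  have hsorted' : (eigsDesc (signlessLaplacian G)).Pairwise (· ≥ ·) := by
    rw [hed]; exact rev_sort_sorted _
  refine sorted_ge_getD hsorted' 0 ?_
  rw [hed, filter_length_rev_sort _ (fun x => (d3 : ℝ) - Real.sqrt 2 ≤ x), hroots,
    card_filter_map' hQ.eigenvalues (fun x => (d3 : ℝ) - Real.sqrt 2 ≤ x)]
  exact h3

end Rest

theorem stmt_17 {V : Type*} [Fintype V] [DecidableEq V] (G : SimpleGraph V)
    [DecidableRel G.Adj] (hn : 3 ≤ Fintype.card V) :
    ((degsDesc G).getD 2 0 : ℝ) - Real.sqrt 2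
      ≤ (eigsDesc (signlessLaplacian G)).getD 2 0 := by
  exact stmt_17' G hn
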